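/- Every bijective affine map u : Mat₂(𝔽₂) → Mat₂(𝔽₂) that preserves the determinant (det(u(M)) = det(M) for all M) has linear part belonging to the symplectic group of the form B(X,Y) = det(X+Y) − det X − det Y. -/

import Mathlib

/-- Every determinant-preserving affine automorphism of `Mat₂(𝔽₂)` has its linear part
in the symplectic group of `B(X,Y) = det(X+Y) - det X - det Y`. -/
theorem stmt_11
    (u : Matrix (Fin 2) (Fin 2) (ZMod 2) ≃ᵃ[ZMod 2] Matrix (Fin 2) (Fin 2) (ZMod 2))
    (hu : ∀ M, (u M).det = M.det) :
    ∀ X Y : Matrix (Fin 2) (Fin 2) (ZMod 2),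
      (u.linear X + u.linear Y).det - (u.linear X).det - (u.linear Y).det
        = (X + Y).det - X.det - Y.det := by
  intro X Y
  have hlin : ∀ M : Matrix (Fin 2) (Fin 2) (ZMod 2), u.linear M = u M - u 0 := by
    intro M
    have h := u.toAffineMap.linearMap_vsub M 0
    simpa [vsub_eq_sub] using h
  have hS0 : u (X + Y) = u X + u Y - u 0 := by
    have h := hlin (X + Y)
    rw [map_add, hlin X, hlin Y] at h
    linear_combination (norm := abel) -h
  have hX := hu X
  have hY := hu Y
  have h0 := hu 0
  have hS := hu (X + Y)
  rw [hS0] at hS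
  rw [Matrix.det_zero] at h0
  rw [hlin X, hlin Y]
  simp only [Matrix.det_fin_two, Matrix.add_apply, Matrix.sub_apply] at hX hY h0 hS ⊢
  linear_combination hS - hX - hY + h0
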